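/- Let G be a word in the matrices P = [[1,1],[1,0]] and M = [[0,1],[1,1]] with PGP = [[α, β'],[β, α']], and let N = p + m where p and m are the total degrees of PGP in P and M respectively. Then β' is the unique integer with 0 < β' < α and ββ' ≡ (-1)^{N-1} (mod α). -/
import Mathlib

/-- The matrix `P = [[1,1],[1,0]]`. -/
def Pm : Matrix (Fin 2) (Fin 2) ℤ := !![1, 1; 1, 0]

/-- The matrix `M = [[0,1],[1,1]]`. -/
def Mm : Matrix (Fin 2) (Fin 2) ℤ := !![0, 1; 1, 1]

/-- A letter of a word in `P` and `M`. -/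
def toMat (b : Bool) : Matrix (Fin 2) (Fin 2) ℤ := if b then Pm else Mm

/-- The product of a word in `P` and `M`. -/
def wordProd (w : List Bool) : Matrix (Fin 2) (Fin 2) ℤ := (w.map toMat).prod

lemma det_toMat (b : Bool) : (toMat b).det = -1 := by
  cases b <;> simp [toMat, Pm, Mm, Matrix.det_fin_two_of]

lemma det_wordProd (w : List Bool) : (wordProd w).det = (-1) ^ w.length := by
  induction w with
  | nil => simp [wordProd]
  | cons b w ih =>
    have h : wordProd (b :: w) = toMat b * wordProd w := by
      simp [wordProd]
    rw [h, Matrix.det_mul, det_toMat, ih, List.length_cons, pow_succ]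
    ring

lemma wordProd_append (w : List Bool) (b : Bool) :
    wordProd (w ++ [b]) = wordProd w * toMat b := by
  simp [wordProd]

lemma mulPm_00 (B : Matrix (Fin 2) (Fin 2) ℤ) : (B * Pm) 0 0 = B 0 0 + B 0 1 := by
  simp [Matrix.mul_apply, Fin.sum_univ_two, Pm]

lemma mulPm_01 (B : Matrix (Fin 2) (Fin 2) ℤ) : (B * Pm) 0 1 = B 0 0 := by
  simp [Matrix.mul_apply, Fin.sum_univ_two, Pm]

lemma mulPm_10 (B : Matrix (Fin 2) (Fin 2) ℤ) : (B * Pm) 1 0 = B 1 0 + B 1 1 := by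
  simp [Matrix.mul_apply, Fin.sum_univ_two, Pm]

lemma mulPm_11 (B : Matrix (Fin 2) (Fin 2) ℤ) : (B * Pm) 1 1 = B 1 0 := by
  simp [Matrix.mul_apply, Fin.sum_univ_two, Pm]

lemma mulMm_00 (B : Matrix (Fin 2) (Fin 2) ℤ) : (B * Mm) 0 0 = B 0 1 := by
  simp [Matrix.mul_apply, Fin.sum_univ_two, Mm]

lemma mulMm_01 (B : Matrix (Fin 2) (Fin 2) ℤ) : (B * Mm) 0 1 = B 0 0 + B 0 1 := by
  simp [Matrix.mul_apply, Fin.sum_univ_two, Mm]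

lemma firstRow_pos (w : List Bool) :
    0 < (Pm * wordProd w) 0 0 ∧ 0 < (Pm * wordProd w) 0 1 := by
  induction w using List.reverseRecOn with
  | nil =>
    norm_num [wordProd, Pm]
  | append_singleton w b ih =>
    obtain ⟨h1, h2⟩ := ih
    have h : Pm * wordProd (w ++ [b]) = (Pm * wordProd w) * toMat b := by
      rw [wordProd_append, ← Matrix.mul_assoc]
    rw [h]
    cases b
    · rw [show toMat false = Mm from rfl, mulMm_00, mulMm_01]
      exact ⟨h2, by linarith⟩
    · rw [show toMat true = Pm from rfl, mulPm_00, mulPm_01]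
      exact ⟨by linarith, h1⟩

/-- If `PGP = [[α, β'],[β, α']]` with `N` matrix factors, then `β'` is the unique
integer with `0 < β' < α` and `β β' ≡ (-1)^(N-1) (mod α)`. -/
theorem PGP_beta_prime (w : List Bool) :
    (0 < (Pm * wordProd w * Pm) 0 1 ∧
      (Pm * wordProd w * Pm) 0 1 < (Pm * wordProd w * Pm) 0 0 ∧
      (Pm * wordProd w * Pm) 1 0 * (Pm * wordProd w * Pm) 0 1 ≡
        (-1 : ℤ) ^ (w.length + 2 - 1) [ZMOD (Pm * wordProd w * Pm) 0 0]) ∧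
    ∀ x : ℤ, 0 < x → x < (Pm * wordProd w * Pm) 0 0 →
      (Pm * wordProd w * Pm) 1 0 * x ≡
        (-1 : ℤ) ^ (w.length + 2 - 1) [ZMOD (Pm * wordProd w * Pm) 0 0] →
      x = (Pm * wordProd w * Pm) 0 1 := by
  obtain ⟨hb0, hb1⟩ := firstRow_pos w
  have hlen : w.length + 2 - 1 = w.length + 1 := rfl
  have hdet : (Pm * wordProd w * Pm) 0 0 * (Pm * wordProd w * Pm) 1 1 -
      (Pm * wordProd w * Pm) 0 1 * (Pm * wordProd w * Pm) 1 0 = (-1) ^ w.length := by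
    have h1 : (Pm * wordProd w * Pm).det = (-1) ^ w.length := by
      rw [Matrix.det_mul, Matrix.det_mul, det_wordProd]
      have hP : Pm.det = -1 := by simp [Pm, Matrix.det_fin_two_of]
      rw [hP]; ring
    rw [← h1, Matrix.det_fin_two]
  rw [hlen, mulPm_00, mulPm_01, mulPm_10, mulPm_11] at *
  generalize hB : Pm * wordProd w = B at *
  have h00 : 0 < B 0 0 + B 0 1 := by linarith
  constructor
  · refine ⟨hb0, by linarith, ?_⟩
    refine Int.modEq_iff_dvd.mpr ⟨-(B 1 0), ?_⟩
    rw [pow_succ]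
    linear_combination hdet
  · intro x hx0 hxlt hx
    have hcong : (B 1 0 + B 1 1) * B 0 0 ≡ (-1 : ℤ) ^ (w.length + 1)
        [ZMOD B 0 0 + B 0 1] := by
      refine Int.modEq_iff_dvd.mpr ⟨-(B 1 0), ?_⟩
      rw [pow_succ]
      linear_combination hdet
    have hcop : IsCoprime (B 0 0 + B 0 1) (B 1 0 + B 1 1) := by
      refine ⟨(-1) ^ w.length * B 1 0, (-1) ^ w.length * (-(B 0 0)), ?_⟩
      have hs : ((-1 : ℤ) ^ w.length) * ((-1 : ℤ) ^ w.length) = 1 := by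
        rw [← pow_add]
        exact Even.neg_one_pow ⟨w.length, rfl⟩
      linear_combination ((-1 : ℤ) ^ w.length) * hdet + hs
    have hd : (B 0 0 + B 0 1) ∣ (B 1 0 + B 1 1) * (x - B 0 0) := by
      have h1 : (B 1 0 + B 1 1) * B 0 0 ≡ (B 1 0 + B 1 1) * x
          [ZMOD B 0 0 + B 0 1] := hcong.trans hx.symm
      have h2 := Int.ModEq.dvd h1
      rwa [show (B 1 0 + B 1 1) * x - (B 1 0 + B 1 1) * B 0 0 =
        (B 1 0 + B 1 1) * (x - B 0 0) from by ring] at h2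
    have hd' : (B 0 0 + B 0 1) ∣ (x - B 0 0) := hcop.dvd_of_dvd_mul_left hd
    obtain ⟨k, hk⟩ := hd'
    have hk0 : k = 0 := by
      by_contra hne
      rcases lt_or_gt_of_ne hne with h | h
      · have h1 : k ≤ -1 := by omega
        nlinarith [mul_le_mul_of_nonneg_left h1 (le_of_lt h00)]
      · have h1 : (1 : ℤ) ≤ k := h
        nlinarith [mul_le_mul_of_nonneg_left h1 (le_of_lt h00)]
    rw [hk0, mul_zero] at hk
    linarith
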